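/- For k odd with k ≥ 3 and n odd, the tuples (a_1,...,a_k) of nonnegative integers with a_{i-1}+a_i ≤ n cyclically (a_0 = a_k) and a_1+...+a_k = (nk-1)/2 are exactly those with every a_i ∈ {(n-1)/2, (n+1)/2} and no two cyclically adjacent entries both equal to (n+1)/2; there are exactly (k-1)/2 entries equal to (n+1)/2 in each such tuple. -/

import Mathlib

/-- Non-attacking rook placement on the linear chained board `B⁻_{n,k}`:
rooks are triples (board, row, column). -/
def LinNonAtt (n k : ℕ) (R : Finset (Fin k × Fin n × Fin n)) : Prop :=
  (∀ r ∈ R, ∀ s ∈ R, r ≠ s → r.1 = s.1 → r.2.1 ≠ s.2.1 ∧ r.2.2 ≠ s.2.2) ∧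
  (∀ r ∈ R, ∀ s ∈ R, (r.1 : ℕ) + 1 = (s.1 : ℕ) → r.2.1 ≠ s.2.2)

/-- Non-attacking rook placement on the circular chained board `B°_{n,k}`. -/
def CircNonAtt (n k : ℕ) (R : Finset (Fin k × Fin n × Fin n)) : Prop :=
  (∀ r ∈ R, ∀ s ∈ R, r ≠ s → r.1 = s.1 → r.2.1 ≠ s.2.1 ∧ r.2.2 ≠ s.2.2) ∧
  (∀ r ∈ R, ∀ s ∈ R, ((r.1 : ℕ) + 1) % k = (s.1 : ℕ) → r.2.1 ≠ s.2.2)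

/-- Number of rooks of `R` on board `i`. -/
def bCount {n k : ℕ} (R : Finset (Fin k × Fin n × Fin n)) (i : Fin k) : ℕ :=
  (R.filter fun r => r.1 = i).card

/-- `a_{i-1}` with the convention `a_0 = 0` (linear case). -/
def prevL {k : ℕ} (a : Fin k → ℕ) (i : Fin k) : ℕ :=
  if i.val = 0 then 0
  else a ⟨i.val - 1, Nat.lt_of_le_of_lt (Nat.sub_le _ _) i.isLt⟩

/-- `a_{i-1}` with cyclic index convention (circular case). -/
def prevC {k : ℕ} (a : Fin k → ℕ) (i : Fin k) : ℕ :=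
  a ⟨(i.val + (k - 1)) % k, Nat.mod_lt _ i.pos⟩


section Helpers
variable {k : ℕ} [NeZero k]

lemma prevC_eq_add (a : Fin k → ℕ) (i : Fin k) :
    prevC a i = a (i + ⟨k - 1, Nat.sub_lt (Nat.pos_of_ne_zero (NeZero.ne k)) one_pos⟩) := by
  unfold prevC
  congr 1

lemma sum_prevC (a : Fin k → ℕ) : ∑ i, prevC a i = ∑ i, a i := by
  simp only [prevC_eq_add]
  exact Fintype.sum_equiv (Equiv.addRight (⟨k - 1, Nat.sub_lt (Nat.pos_of_ne_zero (NeZero.ne k)) one_pos⟩ : Fin k)) _ _ (fun i => rfl)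

lemma prevC_add_one (hk : 2 ≤ k) (a : Fin k → ℕ) (i : Fin k) :
    prevC a (i + 1) = a i := by
  unfold prevC
  congr 1
  ext
  show ((i + 1 : Fin k).val + (k - 1)) % k = i.val
  rw [Fin.add_def, Fin.val_one', Nat.mod_eq_of_lt (by omega : 1 < k),
    Nat.mod_add_mod]
  have : i.val + 1 + (k - 1) = i.val + k := by omega
  rw [this, Nat.add_mod_right, Nat.mod_eq_of_lt i.isLt]

lemma exists_of_sum_eq_one {α : Type*} [Fintype α] [DecidableEq α] (f : α → ℕ)
    (h : ∑ i, f i = 1) : ∃ j, f j = 1 ∧ ∀ i, i ≠ j → f i = 0 := by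
  have hj : ∃ j, f j ≠ 0 := by
    by_contra hc
    push_neg at hc
    simp [hc] at h
  obtain ⟨j, hj⟩ := hj
  have hsplit := Finset.add_sum_erase Finset.univ f (Finset.mem_univ j)
  rw [h] at hsplit
  have h0 : ∑ i ∈ Finset.univ.erase j, f i = 0 := by omega
  refine ⟨j, by omega, fun i hi => ?_⟩
  exact (Finset.sum_eq_zero_iff.mp h0) i (Finset.mem_erase.mpr ⟨hi, Finset.mem_univ i⟩)

end Helpers

open Fin.CommRing in
/-- For `k ≥ 3` odd and `n` odd, the cyclic compositions summing to `(nk-1)/2` are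
exactly those with all entries in `{(n-1)/2, (n+1)/2}`, no two cyclically adjacent
entries both `(n+1)/2`, and exactly `(k-1)/2` entries equal to `(n+1)/2`. -/
theorem circular_max_compositions_k_odd_n_odd (n k : ℕ) (hk : 3 ≤ k)
    (hko : Odd k) (hno : Odd n) (a : Fin k → ℕ) :
    ((∀ i, prevC a i + a i ≤ n) ∧ (∑ i, a i) = (n * k - 1) / 2) ↔
      ((∀ i, a i = (n - 1) / 2 ∨ a i = (n + 1) / 2) ∧
       (∀ i j : Fin k, ((i : ℕ) + 1) % k = (j : ℕ) →
          ¬(a i = (n + 1) / 2 ∧ a j = (n + 1) / 2)) ∧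
       (Finset.univ.filter fun i : Fin k => a i = (n + 1) / 2).card = (k - 1) / 2) := by
  haveI : NeZero k := ⟨by omega⟩
  obtain ⟨m, hm⟩ := hno
  obtain ⟨l, hl⟩ := hko
  have hl1 : 1 ≤ l := by omega
  have hm1 : (n - 1) / 2 = m := by omega
  have hm2 : (n + 1) / 2 = m + 1 := by omega
  have hkl : (k - 1) / 2 = l := by omega
  rw [hm1, hm2, hkl]
  have hq : ∃ q, n * k = 2 * (2 * q + m + l) + 1 ∧ k * m = 2 * q + m := by
    refine ⟨m * l, ?_, ?_⟩
    · rw [hm, hl]; ring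
    · rw [hl]; ring
  obtain ⟨q, hq1, hq2⟩ := hq
  -- counting lemma used in both directions
  have count_sum : ∀ (_ : ∀ i, a i = m ∨ a i = m + 1),
      ∑ i, a i = k * m + (Finset.univ.filter fun i : Fin k => a i = m + 1).card := by
    intro h1
    have step : ∀ i : Fin k, a i = m + (if a i = m + 1 then 1 else 0) := by
      intro i
      rcases h1 i with h | h <;> rw [h] <;> split_ifs <;> omega
    rw [Finset.sum_congr rfl (fun i _ => step i), Finset.sum_add_distrib,
      Finset.sum_const, Finset.card_univ, Fintype.card_fin, smul_eq_mul,
      ← Finset.card_filter]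
  constructor
  · rintro ⟨hA, hS⟩
    -- sum of pair-sums
    have hodd : ∑ i, (prevC a i + a i) = n * k - 1 := by
      rw [Finset.sum_add_distrib, sum_prevC, hS]
      omega
    have hone : ∑ i, (n - (prevC a i + a i)) = 1 := by
      have h2 : ∑ i, ((n - (prevC a i + a i)) + (prevC a i + a i)) = ∑ _i : Fin k, n := by
        refine Finset.sum_congr rfl fun i _ => ?_
        have := hA i
        omega
      rw [Finset.sum_add_distrib, hodd, Finset.sum_const, Finset.card_univ,
        Fintype.card_fin, smul_eq_mul, mul_comm k n] at h2
      omega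
    obtain ⟨j, hj1, hj0⟩ := exists_of_sum_eq_one _ hone
    have hsj : prevC a j + a j = n - 1 := by have := hA j; omega
    have hsn : ∀ i, i ≠ j → prevC a i + a i = n := by
      intro i hi
      have := hj0 i hi
      have := hA i
      omega
    have haj : a j ≤ n := by omega
    -- key induction along the cycle
    have key : ∀ t, t ≤ k - 1 → a (j + (t : Fin k)) = if Even t then a j else n - a j := by
      intro t
      induction t with
      | zero => intro _; simp
      | succ t ih =>
        intro ht
        have ht' : t ≤ k - 1 := by omega
        have hcast : ((t + 1 : ℕ) : Fin k) = (t : Fin k) + 1 := by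
          push_cast
          ring
        have hne : j + ((t + 1 : ℕ) : Fin k) ≠ j := by
          intro hEq
          have h0 : ((t + 1 : ℕ) : Fin k) = 0 := by
            have := add_eq_left.mp hEq
            exact this
          have : ((t + 1 : ℕ) : Fin k).val = (0 : Fin k).val := by rw [h0]
          rw [Fin.val_cast_of_lt (by omega : t + 1 < k)] at this
          simp at this
        have hs := hsn _ hne
        rw [hcast, ← add_assoc, prevC_add_one (by omega) a] at hs
        rw [ih ht'] at hs
        rw [hcast, ← add_assoc]
        by_cases hev : Even t
        · rw [if_pos hev] at hs
          rw [if_neg (by simp [Nat.even_add_one, hev])]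
          omega
        · rw [if_neg hev] at hs
          rw [if_pos (by simp [Nat.even_add_one, hev])]
          omega
    -- a j = m
    have hprevj : prevC a j = a (j + ((k - 1 : ℕ) : Fin k)) := by
      rw [prevC_eq_add]
      congr 1
      ext
      rw [Fin.add_def, Fin.add_def, Fin.val_cast_of_lt (by omega : k - 1 < k)]
    have hajm : a j = m := by
      have h2l := key (k - 1) le_rfl
      rw [if_pos (by exact ⟨l, by omega⟩)] at h2l
      rw [hprevj, h2l] at hsj
      omega
    -- every entry is m or m+1
    have h1 : ∀ i, a i = m ∨ a i = m + 1 := by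
      intro i
      have hrepr : i = j + (((i - j).val : ℕ) : Fin k) := by
        rw [Fin.cast_val_eq_self]
        abel
      rw [hrepr, key (i - j).val (by have := (i - j).isLt; omega)]
      split_ifs <;> omega
    refine ⟨h1, ?_, ?_⟩
    · rintro i j' hij ⟨hi, hj'⟩
      have hj'eq : j' = i + 1 := by
        ext
        rw [Fin.add_def, Fin.val_one', Nat.mod_eq_of_lt (by omega : 1 < k), ← hij]
      have := hA j'
      rw [hj'eq, prevC_add_one (by omega) a] at this
      rw [hj'eq] at hj'
      omega
    · have := count_sum h1
      rw [hS, hq1] at this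
      rw [hq2] at this
      omega
  · rintro ⟨h1, h2, h3⟩
    constructor
    · intro i
      set p : Fin k := ⟨(i.val + (k - 1)) % k, Nat.mod_lt _ i.pos⟩ with hp
      have hpi : ((p : ℕ) + 1) % k = (i : ℕ) := by
        show ((i.val + (k - 1)) % k + 1) % k = i.val
        rw [Nat.mod_add_mod]
        have : i.val + (k - 1) + 1 = i.val + k := by omega
        rw [this, Nat.add_mod_right, Nat.mod_eq_of_lt i.isLt]
      have hnot := h2 p i hpi
      have hpa : prevC a i = a p := rfl
      rw [hpa]
      rcases h1 p with hp1 | hp1 <;> rcases h1 i with hi1 | hi1 <;> omega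
    · have := count_sum h1
      rw [h3] at this
      rw [this, hq1, hq2]
      omega
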